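/- Let A ∈ B(H) satisfy ker A ⊂ ker A* (in particular A normal) and g ∈ ran A. Then there exists at most one f ∈ H with A f = g and f ∈ closure(K(A,g)). -/

import Mathlib

/-- Proposition 2.6: if `A` is bounded with `ker A ⊆ ker A*` (in particular normal),
then there is at most one Krylov solution to `A f = g`. -/
theorem stmt7 {H : Type*} [NormedAddCommGroup H] [InnerProductSpace ℂ H]
    [CompleteSpace H] (A : H →L[ℂ] H)
    (hker : ∀ x : H, A x = 0 → ContinuousLinearMap.adjoint A x = 0)
    (g f₁ f₂ : H) (h1 : A f₁ = g)
    (h1K : f₁ ∈ (Submodule.span ℂ (Set.range fun k : ℕ => (A ^ k) g)).topologicalClosure)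
    (h2 : A f₂ = g)
    (h2K : f₂ ∈ (Submodule.span ℂ (Set.range fun k : ℕ => (A ^ k) g)).topologicalClosure) :
    f₁ = f₂ := by
  set K := Submodule.span ℂ (Set.range fun k : ℕ => (A ^ k) g) with hK
  set d := f₁ - f₂ with hd
  have hAd : A d = 0 := by simp [hd, map_sub, h1, h2]
  have hAd' : ContinuousLinearMap.adjoint A d = 0 := hker d hAd
  have hdK : d ∈ K.topologicalClosure := sub_mem h1K h2K
  have hdKo : d ∈ Kᗮ := by
    rw [Submodule.mem_orthogonal]
    intro u hu
    induction hu using Submodule.span_induction with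
    | mem x hx =>
      obtain ⟨k, rfl⟩ := hx
      have : (A ^ k) g = A ((A ^ k) f₁) := by
        rw [← h1]
        have := Commute.pow_left (Commute.refl A) k
        calc (A ^ k) (A f₁) = ((A ^ k) * A) f₁ := rfl
          _ = (A * (A ^ k)) f₁ := by rw [this.eq]
          _ = A ((A ^ k) f₁) := rfl
      show (inner ℂ ((A^k) g) d : ℂ) = 0
      rw [this, ← ContinuousLinearMap.adjoint_inner_right, hAd', inner_zero_right]
    | zero => simp
    | add x y _ _ hx hy => simp [inner_add_left, hx, hy]
    | smul c x _ hx => simp [inner_smul_left, hx]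
  have hdKc : d ∈ Kᗮᗮ := by
    rw [Submodule.orthogonal_orthogonal_eq_closure]
    exact hdK
  have : d = 0 := by
    have := (Submodule.mem_orthogonal _ _).mp hdKc d hdKo
    simpa [inner_self_eq_zero] using this
  exact sub_eq_zero.mp this
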